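/- (Squeeze theorem) Let A be the set of prime numbers and let N ∈ ℕ. Suppose L, U ∈ ℝ satisfy 0 ≤ L < E[τ_{N+i}] < U for all 1 ≤ i ≤ 6 (in particular these expectations are finite). Then E_{N,L}[τ_0] < E[τ] < E_{N,U}[τ_0]. -/

import Mathlib

open MeasureTheory ProbabilityTheory
open scoped ENNReal NNReal

noncomputable section

/-- The cumulative sum `S_t^(s) = s + X_1 + ... + X_t`, where the die faces are
`ω 0 + 1, ω 1 + 1, ...` (each in `{1,...,6}`). -/
def partialSum (s : ℕ) (ω : ℕ → Fin 6) (t : ℕ) : ℕ :=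
  s + ∑ j ∈ Finset.range t, ((ω j : ℕ) + 1)

/-- The hitting time `τ_s = inf {t : S_t^(s) ∈ A}`, with value `⊤` if the sum never hits `A`. -/
def hitTime (A : Set ℕ) (s : ℕ) (ω : ℕ → Fin 6) : ℕ∞ :=
  sInf {t : ℕ∞ | ∃ n : ℕ, t = (n : ℕ∞) ∧ partialSum s ω n ∈ A}

/-- The expectation `E[τ_s]`, as a Lebesgue integral with values in `[0,∞]`. -/
def hitExp (P : Measure (ℕ → Fin 6)) (A : Set ℕ) (s : ℕ) : ℝ≥0∞ :=
  ∫⁻ ω, (hitTime A s ω : ℝ≥0∞) ∂P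

open Classical in
/-- The truncated expectation `E_{N,B}[τ_s]`, defined by backward recursion. -/
def EC (A : Set ℕ) (N : ℕ) (B : ℝ) (s : ℕ) : ℝ :=
  if N < s then B
  else if s ∈ A then 0
  else 1 + (1/6) * ∑ i ∈ Finset.range 6, EC A N B (s + i + 1)
termination_by N + 1 - s
decreasing_by omega

namespace SqueezeAux
open scoped Classical

/-! ### Deterministic lemmas -/

lemma partialSum_zero (s : ℕ) (ω : ℕ → Fin 6) : partialSum s ω 0 = s := by
  simp [partialSum]

lemma partialSum_succ (s : ℕ) (ω : ℕ → Fin 6) (t : ℕ) :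
    partialSum s ω (t + 1) = partialSum (s + ((ω 0 : ℕ) + 1)) (fun n => ω (n + 1)) t := by
  simp only [partialSum, Finset.sum_range_succ']
  ring

lemma partialSum_congr {ω ω' : ℕ → Fin 6} {t : ℕ} (h : ∀ j < t, ω j = ω' j) {s u : ℕ}
    (hu : u ≤ t) : partialSum s ω u = partialSum s ω' u := by
  unfold partialSum
  congr 1
  refine Finset.sum_congr rfl fun j hj => ?_
  rw [h j (lt_of_lt_of_le (Finset.mem_range.mp hj) hu)]

lemma hitTime_eq (A : Set ℕ) (s : ℕ) (ω : ℕ → Fin 6) :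
    hitTime A s ω = if h : ∃ n, partialSum s ω n ∈ A then ((Nat.find h : ℕ) : ℕ∞) else ⊤ := by
  unfold hitTime
  split
  · next h =>
    refine le_antisymm (sInf_le ⟨Nat.find h, rfl, Nat.find_spec h⟩) (le_sInf ?_)
    rintro x ⟨n, rfl, hn⟩
    exact_mod_cast Nat.find_min' h hn
  · next h =>
    push_neg at h
    rw [sInf_eq_top]
    rintro x ⟨n, rfl, hn⟩
    exact absurd hn (h n)

lemma lt_hitTime_iff {A : Set ℕ} {s t : ℕ} {ω : ℕ → Fin 6} :
    (t : ℕ∞) < hitTime A s ω ↔ ∀ u ≤ t, partialSum s ω u ∉ A := by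
  rw [hitTime_eq]
  split
  · next h => rw [Nat.cast_lt, Nat.lt_find_iff]
  · next h =>
    push_neg at h
    constructor
    · intro _ u _
      exact h u
    · intro _
      exact lt_of_le_of_ne le_top (by simp)

lemma hitTime_of_mem {A : Set ℕ} {s : ℕ} (hs : s ∈ A) (ω : ℕ → Fin 6) :
    hitTime A s ω = 0 := by
  refine le_antisymm (sInf_le ⟨0, rfl, ?_⟩) zero_le
  simpa [partialSum_zero] using hs

/-! ### Survival sets -/

/-- extend a finite tuple to `ℕ → Fin 6` by zeros -/
def extf (t : ℕ) (a : Fin t → Fin 6) : ℕ → Fin 6 := fun j => if h : j < t then a ⟨j, h⟩ else 0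

lemma extf_lt {t : ℕ} (a : Fin t → Fin 6) {j : ℕ} (h : j < t) : extf t a j = a ⟨j, h⟩ :=
  dif_pos h

lemma extf_shift (t : ℕ) (a : Fin (t + 1) → Fin 6) :
    (fun n => extf (t + 1) a (n + 1)) = extf t (Fin.tail a) := by
  funext n
  unfold extf
  by_cases h : n < t
  · rw [dif_pos (by omega : n + 1 < t + 1), dif_pos h]
    rfl
  · rw [dif_neg (by omega), dif_neg h]

/-- the tuples of `t` die rolls surviving (not hitting `A`) up to time `t`, started at `s` -/
def Gd (A : Set ℕ) (s t : ℕ) : Finset (Fin t → Fin 6) :=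
  Finset.univ.filter fun a => ∀ u ≤ t, partialSum s (extf t a) u ∉ A

lemma mem_Gd {A : Set ℕ} {s t : ℕ} {a : Fin t → Fin 6} :
    a ∈ Gd A s t ↔ ∀ u ≤ t, partialSum s (extf t a) u ∉ A := by
  simp [Gd]

lemma Gd_of_mem {A : Set ℕ} {s : ℕ} (hs : s ∈ A) (t : ℕ) : Gd A s t = ∅ := by
  ext a
  simp only [mem_Gd, Finset.notMem_empty, iff_false, not_forall]
  exact ⟨0, Nat.zero_le _, by simpa [partialSum_zero] using hs⟩

lemma Gd_zero {A : Set ℕ} {s : ℕ} (hs : s ∉ A) : (Gd A s 0).card = 1 := by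
  have : Gd A s 0 = Finset.univ := by
    ext a
    simp only [mem_Gd, Finset.mem_univ, iff_true]
    intro u hu
    interval_cases u
    simpa [partialSum_zero] using hs
  rw [this, Finset.card_univ]
  simp

lemma Gd_succ {A : Set ℕ} {s : ℕ} (hs : s ∉ A) (t : ℕ) :
    Gd A s (t + 1) =
      Finset.univ.biUnion fun i : Fin 6 => (Gd A (s + i + 1) t).image (Fin.cons i) := by
  ext a
  simp only [Finset.mem_biUnion, Finset.mem_univ, true_and, Finset.mem_image]
  constructor
  · intro ha
    refine ⟨a 0, Fin.tail a, mem_Gd.mpr fun u hu => ?_, Fin.cons_self_tail a⟩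
    have h2 := mem_Gd.mp ha (u + 1) (by omega)
    rw [partialSum_succ, extf_shift, extf_lt a (by omega : (0:ℕ) < t+1)] at h2
    have : s + ((a ⟨0, by omega⟩ : ℕ) + 1) = s + (a 0 : ℕ) + 1 := by
      simp [Fin.ext_iff]; ring
    rwa [this] at h2
  · rintro ⟨i, b, hb, rfl⟩
    refine mem_Gd.mpr fun u hu => ?_
    match u with
    | 0 => simpa [partialSum_zero] using hs
    | u + 1 =>
      rw [partialSum_succ, extf_shift, extf_lt _ (by omega : (0:ℕ) < t+1)]
      have h0 : (Fin.cons i b : Fin (t+1) → Fin 6) ⟨0, by omega⟩ = i := rfl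
      rw [h0, Fin.tail_cons]
      have := mem_Gd.mp hb u (by omega)
      rwa [show s + ((i:ℕ) + 1) = s + i + 1 by ring]

lemma Gd_card_succ {A : Set ℕ} {s : ℕ} (hs : s ∉ A) (t : ℕ) :
    (Gd A s (t + 1)).card = ∑ i : Fin 6, (Gd A (s + i + 1) t).card := by
  rw [Gd_succ hs t, Finset.card_biUnion]
  · refine Finset.sum_congr rfl fun i _ => ?_
    exact Finset.card_image_of_injective _ (Fin.cons_right_injective (α := fun _ => Fin 6) i)
  · intro i _ j _ hij
    rw [Function.onFun, Finset.disjoint_left]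
    intro a ha hc
    rw [Finset.mem_image] at ha hc
    obtain ⟨b, _, rfl⟩ := ha
    obtain ⟨c, _, hc⟩ := hc
    apply hij
    have := congrFun hc 0
    simpa [Fin.cons_zero] using this.symm

/-! ### Cylinders and events -/

def cyl (t : ℕ) (b : ℕ → Fin 6) : Set (ℕ → Fin 6) := {ω | ∀ j < t, ω j = b j}

lemma cyl_eq (t : ℕ) (b : ℕ → Fin 6) :
    cyl t b = ⋂ j ∈ Finset.range t, (fun ω : ℕ → Fin 6 => ω j) ⁻¹' {b j} := by
  ext ω
  simp [cyl]

lemma measurableSet_cyl (t : ℕ) (b : ℕ → Fin 6) : MeasurableSet (cyl t b) := by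
  rw [cyl_eq]
  exact (Finset.range t).measurableSet_biInter fun j _ =>
    (measurable_pi_apply j) (measurableSet_singleton _)

lemma event_eq (A : Set ℕ) (s t : ℕ) :
    {ω : ℕ → Fin 6 | (t : ℕ∞) < hitTime A s ω} = ⋃ a ∈ Gd A s t, cyl t (extf t a) := by
  ext ω
  simp only [Set.mem_setOf_eq, lt_hitTime_iff, Set.mem_iUnion, exists_prop]
  constructor
  · intro h
    refine ⟨fun j => ω j, mem_Gd.mpr fun u hu => ?_, fun j hj => (extf_lt _ hj).symm ▸ rfl⟩
    rw [partialSum_congr (fun j hj => extf_lt (fun k : Fin t => ω k) hj) hu]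
    exact h u hu
  · rintro ⟨a, ha, hcyl⟩ u hu
    rw [partialSum_congr (fun j hj => hcyl j hj) hu]
    exact mem_Gd.mp ha u hu

lemma measurableSet_event (A : Set ℕ) (s t : ℕ) :
    MeasurableSet {ω : ℕ → Fin 6 | (t : ℕ∞) < hitTime A s ω} := by
  rw [event_eq]
  exact (Gd A s t).measurableSet_biUnion fun a _ => measurableSet_cyl t (extf t a)

/-! ### Probabilities -/

variable {P : Measure (ℕ → Fin 6)} [IsProbabilityMeasure P]
variable (hIndep : iIndepFun (fun n (ω : ℕ → Fin 6) => ω n) P)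
variable (hUnif : ∀ (n : ℕ) (i : Fin 6), P {ω | ω n = i} = 1 / 6)

include hIndep hUnif in
omit [IsProbabilityMeasure P] in
lemma meas_cyl (t : ℕ) (b : ℕ → Fin 6) : P (cyl t b) = (1 / 6 : ℝ≥0∞) ^ t := by
  have h := hIndep.measure_inter_preimage_eq_mul (Finset.range t) (sets := fun j => {b j})
    (fun j _ => measurableSet_singleton _)
  rw [cyl_eq, h]
  have : ∀ j ∈ Finset.range t,
      P ((fun ω : ℕ → Fin 6 => ω j) ⁻¹' {b j}) = (1 / 6 : ℝ≥0∞) := by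
    intro j _
    have : (fun ω : ℕ → Fin 6 => ω j) ⁻¹' {b j} = {ω : ℕ → Fin 6 | ω j = b j} := rfl
    rw [this, hUnif j (b j)]
  rw [Finset.prod_congr rfl this, Finset.prod_const, Finset.card_range]

include hIndep hUnif in
omit [IsProbabilityMeasure P] in
lemma meas_event (A : Set ℕ) (s t : ℕ) :
    P {ω : ℕ → Fin 6 | (t : ℕ∞) < hitTime A s ω} =
      ((Gd A s t).card : ℝ≥0∞) * (1 / 6 : ℝ≥0∞) ^ t := by
  rw [event_eq]
  rw [measure_biUnion_finset ?disj fun a _ => measurableSet_cyl t (extf t a)]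
  · rw [Finset.sum_congr rfl fun a _ => meas_cyl hIndep hUnif t (extf t a),
      Finset.sum_const, nsmul_eq_mul]
  case disj =>
    intro a _ b _ hab
    rw [Function.onFun, Set.disjoint_left]
    intro ω hωa hωb
    apply hab
    funext k
    have h1 := hωa (k : ℕ) k.isLt
    have h2 := hωb (k : ℕ) k.isLt
    rw [extf_lt a k.isLt] at h1
    rw [extf_lt b k.isLt] at h2
    rw [← Fin.eta k k.isLt, ← h1, ← h2]

lemma coe_enat_eq_tsum (n : ℕ∞) :
    (n : ℝ≥0∞) = ∑' t : ℕ, if (t : ℕ∞) < n then 1 else 0 := by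
  induction n using ENat.recTopCoe with
  | top =>
    have : ∀ t : ℕ, (if ((t : ℕ∞) < (⊤ : ℕ∞)) then (1:ℝ≥0∞) else 0) = 1 := by
      intro t
      rw [if_pos (lt_of_le_of_ne le_top (by simp))]
    rw [tsum_congr this, ENNReal.tsum_const_eq_top_of_ne_zero one_ne_zero, ENat.toENNReal_top]
  | coe m =>
    rw [ENat.toENNReal_coe]
    rw [tsum_eq_sum (s := Finset.range m) (fun t ht => if_neg (by
      simp only [Finset.mem_range, not_lt] at ht
      exact not_lt.mpr (by exact_mod_cast ht)))]
    rw [Finset.sum_congr rfl fun t ht => if_pos (by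
      exact_mod_cast Finset.mem_range.mp ht)]
    rw [Finset.sum_const, Finset.card_range, nsmul_eq_mul, mul_one]

omit [IsProbabilityMeasure P] in
lemma hitExp_eq_tsum (A : Set ℕ) (s : ℕ) :
    hitExp P A s = ∑' t : ℕ, P {ω : ℕ → Fin 6 | (t : ℕ∞) < hitTime A s ω} := by
  unfold hitExp
  have h1 : ∀ ω : ℕ → Fin 6, ((hitTime A s ω : ℝ≥0∞)) =
      ∑' t : ℕ, Set.indicator {ω' : ℕ → Fin 6 | (t : ℕ∞) < hitTime A s ω'} (fun _ => 1) ω := by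
    intro ω
    rw [coe_enat_eq_tsum]
    refine tsum_congr fun t => ?_
    rw [Set.indicator_apply]
    rfl
  rw [lintegral_congr h1, lintegral_tsum fun t =>
    (Measurable.indicator measurable_const (measurableSet_event A s t)).aemeasurable]
  refine tsum_congr fun t => ?_
  rw [lintegral_indicator_const (measurableSet_event A s t), one_mul]

omit [IsProbabilityMeasure P] in
lemma hitExp_of_mem {A : Set ℕ} {s : ℕ} (hs : s ∈ A) : hitExp P A s = 0 := by
  unfold hitExp
  have : ∀ ω : ℕ → Fin 6, ((hitTime A s ω : ℝ≥0∞)) = 0 := by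
    intro ω
    rw [hitTime_of_mem hs, ENat.toENNReal_zero]
  rw [lintegral_congr this, lintegral_zero]

include hIndep hUnif in
omit [IsProbabilityMeasure P] in
lemma hitExp_rec {A : Set ℕ} {s : ℕ} (hs : s ∉ A) :
    hitExp P A s = 1 + (1 / 6 : ℝ≥0∞) * ∑ i : Fin 6, hitExp P A (s + i + 1) := by
  have hform : ∀ s' : ℕ, hitExp P A s' = ∑' t : ℕ, ((Gd A s' t).card : ℝ≥0∞) * (1/6) ^ t := by
    intro s'
    rw [hitExp_eq_tsum]
    exact tsum_congr fun t => meas_event hIndep hUnif A s' t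
  rw [hform, tsum_eq_zero_add' ENNReal.summable]
  congr 1
  · rw [Gd_zero hs]; simp
  have hterm : ∀ t : ℕ, ((Gd A s (t+1)).card : ℝ≥0∞) * (1/6) ^ (t+1) =
      ∑ i : Fin 6, (((Gd A (s + i + 1) t).card : ℝ≥0∞) * (1/6) ^ t) * (1/6) := by
    intro t
    rw [Gd_card_succ hs t, Nat.cast_sum, Finset.sum_mul]
    refine Finset.sum_congr rfl fun i _ => ?_
    rw [pow_succ]
    ring
  rw [tsum_congr hterm, Summable.tsum_finsetSum fun i _ => ENNReal.summable]
  rw [Finset.mul_sum]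
  refine Finset.sum_congr rfl fun i _ => ?_
  rw [ENNReal.tsum_mul_right, ← hform (s + i + 1)]
  ring

/-! ### EC lemmas -/

lemma EC_of_gt {A : Set ℕ} {N s : ℕ} (h : N < s) (B : ℝ) : EC A N B s = B := by
  rw [EC, if_pos h]

lemma EC_of_mem {A : Set ℕ} {N s : ℕ} (h : s ≤ N) (hs : s ∈ A) (B : ℝ) : EC A N B s = 0 := by
  rw [EC, if_neg (by omega), if_pos hs]

lemma EC_rec {A : Set ℕ} {N s : ℕ} (h : s ≤ N) (hs : s ∉ A) (B : ℝ) :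
    EC A N B s = 1 + (1/6) * ∑ i ∈ Finset.range 6, EC A N B (s + i + 1) := by
  rw [EC, if_neg (by omega), if_neg hs]

lemma EC_nonneg {A : Set ℕ} {N : ℕ} {B : ℝ} (hB : 0 ≤ B) : ∀ s, 0 ≤ EC A N B s := by
  suffices h : ∀ k s, N + 1 - s ≤ k → 0 ≤ EC A N B s by
    intro s
    exact h (N + 1 - s) s le_rfl
  intro k
  induction k with
  | zero =>
    intro s hk
    rw [EC_of_gt (by omega) B]
    exact hB
  | succ k ih =>
    intro s hk
    by_cases h1 : N < s
    · rw [EC_of_gt h1 B]; exact hB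
    by_cases h2 : s ∈ A
    · rw [EC_of_mem (by omega) h2 B]
    rw [EC_rec (by omega) h2 B]
    have : 0 ≤ ∑ i ∈ Finset.range 6, EC A N B (s + i + 1) :=
      Finset.sum_nonneg fun i _ => ih (s + i + 1) (by omega)
    positivity

lemma exists_nonprime_window (s : ℕ) : ∃ i, i < 6 ∧ ¬ (s + i + 1).Prime := by
  by_cases h : s ≤ 2
  · refine ⟨3 - s, by omega, ?_⟩
    have : s + (3 - s) + 1 = 4 := by omega
    rw [this]
    norm_num
  · rcases Nat.even_or_odd s with he | ho
    · refine ⟨1, by omega, fun hp => ?_⟩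
      have hev : Even (s + 1 + 1) := by
        rcases he with ⟨r, hr⟩; exact ⟨r + 1, by omega⟩
      have := (Nat.Prime.even_iff hp).mp hev
      omega
    · refine ⟨0, by omega, fun hp => ?_⟩
      have hev : Even (s + 0 + 1) := by
        rcases ho with ⟨r, hr⟩; exact ⟨r + 1, by omega⟩
      have := (Nat.Prime.even_iff hp).mp hev
      omega

/-! ### The main induction -/

set_option maxHeartbeats 1000000 in
include hIndep hUnif in
lemma key (N : ℕ) (L U : ℝ) (hL : 0 ≤ L)
    (hLU : ∀ i : ℕ, 1 ≤ i → i ≤ 6 →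
      ENNReal.ofReal L < hitExp P {n | n.Prime} (N + i) ∧
        hitExp P {n | n.Prime} (N + i) < ENNReal.ofReal U) :
    ∀ k s, N + 1 - s ≤ k → s ≤ N →
      (s ∈ {n | n.Prime} → hitExp P {n | n.Prime} s = 0 ∧
        EC {n | n.Prime} N L s = 0 ∧ EC {n | n.Prime} N U s = 0) ∧
      (s ∉ {n | n.Prime} →
        ENNReal.ofReal (EC {n | n.Prime} N L s) < hitExp P {n | n.Prime} s ∧
          hitExp P {n | n.Prime} s < ENNReal.ofReal (EC {n | n.Prime} N U s)) := by
  set A : Set ℕ := {n | n.Prime} with hA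
  have hU : 0 ≤ U := by
    have h1 := (hLU 1 le_rfl (by norm_num)).2
    have : (0 : ℝ≥0∞) < ENNReal.ofReal U := lt_of_le_of_lt zero_le h1
    exact (ENNReal.ofReal_pos.mp this).le
  intro k
  induction k with
  | zero => intro s hk hsN; omega
  | succ k ih =>
    intro s hk hsN
    constructor
    · intro hs
      exact ⟨hitExp_of_mem hs, EC_of_mem hsN hs L, EC_of_mem hsN hs U⟩
    · intro hs
      -- bounds for the six successors
      have hsucc : ∀ i, i < 6 →
          ENNReal.ofReal (EC A N L (s + i + 1)) ≤ hitExp P A (s + i + 1) ∧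
          hitExp P A (s + i + 1) ≤ ENNReal.ofReal (EC A N U (s + i + 1)) ∧
          hitExp P A (s + i + 1) ≠ ⊤ ∧
          ((s + i + 1) ∉ A →
            ENNReal.ofReal (EC A N L (s + i + 1)) < hitExp P A (s + i + 1) ∧
            hitExp P A (s + i + 1) < ENNReal.ofReal (EC A N U (s + i + 1))) := by
        intro i hi
        set v := s + i + 1 with hv
        by_cases hvN : v ≤ N
        · have hIH := ih v (by omega) hvN
          by_cases hvA : v ∈ A
          · obtain ⟨h0, hEL, hEU⟩ := hIH.1 hvA
            rw [h0, hEL, hEU]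
            simp only [ENNReal.ofReal_zero, le_refl, true_and, ne_eq]
            exact ⟨ENNReal.zero_ne_top, fun hc => absurd hvA hc⟩
          · obtain ⟨hlt1, hlt2⟩ := hIH.2 hvA
            exact ⟨hlt1.le, hlt2.le, ne_top_of_lt hlt2, fun _ => ⟨hlt1, hlt2⟩⟩
        · have hNi : N + (v - N) = v := by omega
          have hlu := hLU (v - N) (by omega) (by omega)
          rw [hNi] at hlu
          have hvA : v ∉ A := by
            intro hp
            have h0 : hitExp P A v = 0 := hitExp_of_mem hp
            rw [h0] at hlu
            exact absurd hlu.1 (by simp)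
          rw [EC_of_gt (by omega) L, EC_of_gt (by omega) U]
          exact ⟨hlu.1.le, hlu.2.le, ne_top_of_lt hlu.2, fun _ => ⟨hlu.1, hlu.2⟩⟩
      -- real values of successor expectations
      set r : ℕ → ℝ := fun i => (hitExp P A (s + i + 1)).toReal with hr
      have hofr : ∀ i, i < 6 → hitExp P A (s + i + 1) = ENNReal.ofReal (r i) := by
        intro i hi
        rw [hr]
        exact (ENNReal.ofReal_toReal (hsucc i hi).2.2.1).symm
      have hrnn : ∀ i, 0 ≤ r i := fun i => ENNReal.toReal_nonneg
      have hsum_nn : (0:ℝ) ≤ ∑ i ∈ Finset.range 6, r i :=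
        Finset.sum_nonneg fun i _ => hrnn i
      have hEsum : hitExp P A s =
          ENNReal.ofReal (1 + (1/6) * ∑ i ∈ Finset.range 6, r i) := by
        rw [hitExp_rec hIndep hUnif hs,
          Fin.sum_univ_eq_sum_range (fun j => hitExp P A (s + j + 1)) 6]
        rw [Finset.sum_congr rfl fun i hi => hofr i (Finset.mem_range.mp hi)]
        rw [ENNReal.ofReal_add (by norm_num) (by positivity), ENNReal.ofReal_one,
          ENNReal.ofReal_mul (by norm_num),
          ENNReal.ofReal_sum_of_nonneg fun i _ => hrnn i]
        congr 1
        rw [ENNReal.ofReal_div_of_pos (by norm_num), ENNReal.ofReal_one,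
          ENNReal.ofReal_ofNat]
      -- termwise comparisons
      have hrL : ∀ i, i < 6 → EC A N L (s + i + 1) ≤ r i := by
        intro i hi
        have h1 := (hsucc i hi).1
        rw [hofr i hi] at h1
        exact (ENNReal.ofReal_le_ofReal_iff (hrnn i)).mp h1
      have hrU : ∀ i, i < 6 → r i ≤ EC A N U (s + i + 1) := by
        intro i hi
        have h1 := (hsucc i hi).2.1
        rw [hofr i hi] at h1
        exact (ENNReal.ofReal_le_ofReal_iff (EC_nonneg hU _)).mp h1
      obtain ⟨i0, hi0, hnp⟩ := exists_nonprime_window s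
      have hstrict := (hsucc i0 hi0).2.2.2 hnp
      have hrposL : EC A N L (s + i0 + 1) < r i0 := by
        have h1 := hstrict.1
        rw [hofr i0 hi0] at h1
        have hpos : 0 < r i0 := ENNReal.ofReal_pos.mp (lt_of_le_of_lt zero_le h1)
        exact (ENNReal.ofReal_lt_ofReal_iff hpos).mp h1
      have hrposU : r i0 < EC A N U (s + i0 + 1) := by
        have h1 := hstrict.2
        rw [hofr i0 hi0] at h1
        have hpos : 0 < EC A N U (s + i0 + 1) :=
          ENNReal.ofReal_pos.mp (lt_of_le_of_lt zero_le h1)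
        exact (ENNReal.ofReal_lt_ofReal_iff hpos).mp h1
      have hsumL : ∑ i ∈ Finset.range 6, EC A N L (s + i + 1) < ∑ i ∈ Finset.range 6, r i :=
        Finset.sum_lt_sum (fun i hi => hrL i (Finset.mem_range.mp hi))
          ⟨i0, Finset.mem_range.mpr hi0, hrposL⟩
      have hsumU : ∑ i ∈ Finset.range 6, r i < ∑ i ∈ Finset.range 6, EC A N U (s + i + 1) :=
        Finset.sum_lt_sum (fun i hi => hrU i (Finset.mem_range.mp hi))
          ⟨i0, Finset.mem_range.mpr hi0, hrposU⟩
      have hposr : (0:ℝ) < 1 + 1/6 * ∑ i ∈ Finset.range 6, r i := by positivity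
      constructor
      · rw [hEsum, EC_rec hsN hs L]
        exact (ENNReal.ofReal_lt_ofReal_iff hposr).mpr (by linarith)
      · rw [hEsum, EC_rec hsN hs U]
        have hpos : (0:ℝ) < 1 + 1/6 * ∑ i ∈ Finset.range 6, EC A N U (s + i + 1) := by
          have h9 : (0:ℝ) ≤ ∑ i ∈ Finset.range 6, EC A N U (s + i + 1) :=
            Finset.sum_nonneg fun i _ => EC_nonneg (A := A) (N := N) hU (s + i + 1)
          positivity
        exact (ENNReal.ofReal_lt_ofReal_iff hpos).mpr (by linarith)

end SqueezeAux

set_option maxHeartbeats 1000000 in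
/-- Squeeze theorem: if `0 ≤ L < E[τ_{N+i}] < U` for all `1 ≤ i ≤ 6`, then
`E_{N,L}[τ_0] < E[τ] < E_{N,U}[τ_0]`, where `A` is the set of primes. -/
theorem squeeze_theorem
    (P : Measure (ℕ → Fin 6)) [IsProbabilityMeasure P]
    (hIndep : iIndepFun (fun n (ω : ℕ → Fin 6) => ω n) P)
    (hUnif : ∀ (n : ℕ) (i : Fin 6), P {ω | ω n = i} = 1 / 6) (N : ℕ) (L U : ℝ) (hL : 0 ≤ L)
    (hLU : ∀ i : ℕ, 1 ≤ i → i ≤ 6 →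
      ENNReal.ofReal L < hitExp P {n | n.Prime} (N + i) ∧
        hitExp P {n | n.Prime} (N + i) < ENNReal.ofReal U) :
    ENNReal.ofReal (EC {n | n.Prime} N L 0) < hitExp P {n | n.Prime} 0 ∧
      hitExp P {n | n.Prime} 0 < ENNReal.ofReal (EC {n | n.Prime} N U 0) := by
  have h := SqueezeAux.key hIndep hUnif N L U hL hLU (N + 1) 0 (by omega) (by omega)
  exact h.2 (by simp [Nat.not_prime_zero])
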